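/- For all integers d ≥ 1 and k ≥ 1, with V = ℂ^{2d}, the quotient vector space V^⊗k/C_k has complex dimension (1/k)·Σ_{i=1}^{k} (2d)^{gcd(k,i)}. (This quotient is the degree-k homogeneous part n_k of the necklace Lie algebra in 2d variables.) -/

import Mathlib

open scoped TensorProduct

noncomputable section

/-- `Cyc d k` : the submodule C_k ⊆ V^⊗k (V = ℂ^{2d}), spanned by all
`v₁⊗…⊗vₖ − v₂⊗…⊗vₖ⊗v₁`. -/
def Cyc (d k : ℕ) : Submodule ℂ (⨂[ℂ] _ : Fin k, (Fin (2 * d) → ℂ)) :=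
  Submodule.span ℂ {x | ∃ v : Fin k → (Fin (2 * d) → ℂ),
    x = PiTensorProduct.tprod ℂ v -
        PiTensorProduct.tprod ℂ (fun i => v (finRotate k i))}

namespace NecklaceAux

open scoped Classical

/-! ### Counting part -/

variable {β : Type} [Fintype β]

/-- The set of translations leaving `f` invariant, as an `AddSubgroup`. -/
def invSub {n : ℕ} (f : ZMod n → β) : AddSubgroup (ZMod n) where
  carrier := {x | ∀ j, f (j + x) = f j}
  zero_mem' := by intro j; simp
  add_mem' := by
    intro x y hx hy j
    rw [← add_assoc, hy, hx]
  neg_mem' := by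
    intro x hx j
    have h := hx (j + -x)
    rw [add_assoc, neg_add_cancel, add_zero] at h
    exact h.symm

lemma card_invariant (n g : ℕ) [NeZero n] (hg : g ∣ n) (hg0 : g ≠ 0) :
    Nat.card {f : ZMod n → β | ∀ j, f (j + (g : ZMod n)) = f j} = Nat.card β ^ g := by
  haveI : NeZero g := ⟨hg0⟩
  have key : ∀ (f : ZMod n → β), (∀ j, f (j + (g : ZMod n)) = f j) →
      ∀ (t : ℕ) (j), f (j + ((t * g : ℕ) : ZMod n)) = f j := by
    intro f hf t
    induction t with
    | zero => intro j; simp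
    | succ t ih =>
      intro j
      have h1 : (((t + 1) * g : ℕ) : ZMod n) = ((t * g : ℕ) : ZMod n) + (g : ZMod n) := by
        push_cast; ring
      rw [h1, ← add_assoc, hf, ih]
  have e : {f : ZMod n → β | ∀ j, f (j + (g : ZMod n)) = f j} ≃ (ZMod g → β) :=
    { toFun := fun f x => f.1 ((x.val : ZMod n))
      invFun := fun h => ⟨fun j => h (ZMod.castHom hg (ZMod g) j), by
        intro j
        simp only [map_add, map_natCast, ZMod.natCast_self, add_zero]⟩
      left_inv := by
        rintro ⟨f, hf⟩
        ext j
        simp only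
        have h2 : ZMod.castHom hg (ZMod g) j = ((j.val : ZMod g)) := by
          rw [ZMod.castHom_apply, ← ZMod.natCast_val]
        rw [h2, ZMod.val_natCast]
        have h3 : f j = f ((((j.val % g) : ℕ) : ZMod n) + (((j.val / g * g) : ℕ) : ZMod n)) := by
          have h4 : j.val % g + j.val / g * g = j.val := Nat.mod_add_div' _ _
          rw [← Nat.cast_add, h4, ZMod.natCast_val, ZMod.cast_id]
        rw [h3, key f hf (j.val / g)]
      right_inv := by
        intro h
        funext x
        simp only [map_natCast]
        congr 1
        rw [ZMod.natCast_val, ZMod.cast_id] }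
  rw [Nat.card_congr e, Nat.card_fun, Nat.card_zmod]

lemma countfix (n : ℕ) [NeZero n] (z : ZMod n) :
    Nat.card {f : ZMod n → β | ∀ j, f (j + z) = f j} = Nat.card β ^ Nat.gcd n z.val := by
  set g := Nat.gcd n z.val with hgdef
  have hdvd : g ∣ n := Nat.gcd_dvd_left _ _
  have hne : g ≠ 0 := Nat.gcd_ne_zero_left (NeZero.ne n)
  have hset : {f : ZMod n → β | ∀ j, f (j + z) = f j}
      = {f | ∀ j, f (j + (g : ZMod n)) = f j} := by
    ext f
    simp only [Set.mem_setOf_eq]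
    constructor
    · intro hz
      have h1 : AddSubgroup.zmultiples z ≤ invSub f :=
        (AddSubgroup.zmultiples_le).2 hz
      have h2 : (g : ZMod n) ∈ AddSubgroup.zmultiples z := by
        refine ⟨Nat.gcdB n z.val, ?_⟩
        have hb := Nat.gcd_eq_gcd_ab n z.val
        have : ((g : ℤ) : ZMod n) = (((n : ℤ) * Nat.gcdA n z.val
            + (z.val : ℤ) * Nat.gcdB n z.val : ℤ) : ZMod n) := by
          rw [← hb]
        show (Nat.gcdB n z.val) • z = ((g : ℕ) : ZMod n)
        rw [zsmul_eq_mul]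
        push_cast at this ⊢
        rw [this, ZMod.natCast_self, ZMod.natCast_val, ZMod.cast_id]
        ring
      exact h1 h2
    · intro hgi
      have h1 : AddSubgroup.zmultiples ((g : ZMod n)) ≤ invSub f :=
        (AddSubgroup.zmultiples_le).2 hgi
      have h2 : z ∈ AddSubgroup.zmultiples ((g : ZMod n)) := by
        obtain ⟨t, ht⟩ := Nat.gcd_dvd_right n z.val
        refine ⟨(t : ℤ), ?_⟩
        show (t : ℤ) • ((g : ℕ) : ZMod n) = z
        rw [zsmul_eq_mul]
        push_cast
        rw [← Nat.cast_mul, Nat.mul_comm, hgdef, ← ht, ZMod.natCast_val, ZMod.cast_id]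
      exact h1 h2
  rw [hset]
  exact card_invariant n g hdvd hne

/-! ### The rotation action -/

variable (m K : ℕ)

abbrev X := Fin (K + 1) → Fin m

instance rotAction : AddAction (Fin (K + 1)) (X m K) where
  vadd n f := fun j => f (j + n)
  zero_vadd f := by funext j; show f (j + 0) = f j; rw [add_zero]
  add_vadd a b f := by
    funext j
    show f (j + (a + b)) = f (j + a + b)
    rw [add_assoc]

lemma vadd_def (n : Fin (K + 1)) (f : X m K) : n +ᵥ f = fun j => f (j + n) := rfl

abbrev Q := Quotient (AddAction.orbitRel (Fin (K + 1)) (X m K))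

instance : Finite (Q m K) := Quotient.finite _

noncomputable instance : Fintype (Q m K) := Fintype.ofFinite _

noncomputable instance (a : Fin (K + 1)) : Fintype (AddAction.fixedBy (X m K) a) :=
  Fintype.ofFinite _

def cls (f : X m K) : Q m K := Quotient.mk _ f

variable {m K}

lemma cls_vadd (n : Fin (K + 1)) (f : X m K) : cls m K (n +ᵥ f) = cls m K f :=
  Quotient.sound ((AddAction.orbitRel_apply).2 (AddAction.mem_orbit_iff.2 ⟨n, rfl⟩))

variable (m K)

/-! ### The linear algebra part -/

abbrev T := ⨂[ℂ] _ : Fin (K + 1), (Fin m → ℂ)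

def CycG : Submodule ℂ (T m K) :=
  Submodule.span ℂ {x | ∃ v : Fin (K + 1) → (Fin m → ℂ),
    x = PiTensorProduct.tprod ℂ v -
        PiTensorProduct.tprod ℂ (fun i => v (finRotate (K + 1) i))}

def E (f : X m K) : T m K := PiTensorProduct.tprod ℂ (fun i => Pi.single (f i) 1)

def coordFn (f : X m K) : MultilinearMap ℂ (fun _ : Fin (K + 1) => (Fin m → ℂ)) ℂ :=
  (MultilinearMap.mkPiAlgebra ℂ (Fin (K + 1)) ℂ).compLinearMap (fun i => LinearMap.proj (f i))

variable {m K}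

lemma coordFn_apply (f : X m K) (v : Fin (K + 1) → (Fin m → ℂ)) :
    coordFn m K f v = ∏ i, v i (f i) := by
  simp [coordFn]

lemma coordFn_E (f g : X m K) :
    coordFn m K f (fun i => Pi.single (g i) (1 : ℂ)) = if f = g then 1 else 0 := by
  rw [coordFn_apply]
  by_cases h : f = g
  · subst h; simp
  · rw [if_neg h]
    obtain ⟨i, hi⟩ := Function.ne_iff.1 h
    exact Finset.prod_eq_zero (Finset.mem_univ i) (Pi.single_eq_of_ne hi 1)

variable (m K)

def ind (f : X m K) : Q m K → ℂ := Pi.single (cls m K f) 1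

def μmap : MultilinearMap ℂ (fun _ : Fin (K + 1) => (Fin m → ℂ)) (Q m K → ℂ) :=
  ∑ f : X m K,
    (LinearMap.toSpanSingleton ℂ (Q m K → ℂ) (ind m K f)).compMultilinearMap (coordFn m K f)

def Lmap : T m K →ₗ[ℂ] (Q m K → ℂ) := PiTensorProduct.lift (μmap m K)

variable {m K}

lemma Lmap_tprod (v : Fin (K + 1) → (Fin m → ℂ)) :
    Lmap m K (PiTensorProduct.tprod ℂ v) = ∑ f : X m K, coordFn m K f v • ind m K f := by
  rw [Lmap, PiTensorProduct.lift.tprod, μmap, MultilinearMap.sum_apply]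
  refine Finset.sum_congr rfl fun f _ => ?_
  rw [LinearMap.compMultilinearMap_apply, LinearMap.toSpanSingleton_apply]

lemma Lmap_E (g : X m K) : Lmap m K (E m K g) = ind m K g := by
  rw [E, Lmap_tprod]
  rw [Finset.sum_eq_single g (fun f _ hfg => by rw [coordFn_E, if_neg hfg, zero_smul])
    (fun h => absurd (Finset.mem_univ g) h)]
  rw [coordFn_E, if_pos rfl, one_smul]

lemma tprod_expand (v : Fin (K + 1) → (Fin m → ℂ)) :
    PiTensorProduct.tprod ℂ v = ∑ f : X m K, coordFn m K f v • E m K f := by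
  have hv : v = fun i => ∑ j : Fin m, v i j • (Pi.single j 1 : Fin m → ℂ) := by
    funext i x
    simp [Pi.single_apply, Finset.sum_ite_eq']
  conv_lhs => rw [hv]
  rw [MultilinearMap.map_sum]
  refine Finset.sum_congr rfl fun f _ => ?_
  rw [MultilinearMap.map_smul_univ, coordFn_apply]
  rfl

lemma rot_symm_add_one (j : Fin (K + 1)) : (finRotate (K + 1)).symm (j + 1) = j := by
  rw [← finRotate_succ_apply, Equiv.symm_apply_apply]

lemma ind_rot (f : X m K) :
    ind m K (fun j => f ((finRotate (K + 1)).symm j)) = ind m K f := by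
  have h1 : (1 : Fin (K + 1)) +ᵥ (fun j => f ((finRotate (K + 1)).symm j)) = f := by
    funext j
    show f ((finRotate (K + 1)).symm (j + 1)) = f j
    rw [rot_symm_add_one]
  have h2 : cls m K (fun j => f ((finRotate (K + 1)).symm j)) = cls m K f := by
    conv_rhs => rw [← h1]
    rw [cls_vadd]
  rw [ind, ind, h2]

lemma CycG_le_ker : CycG m K ≤ LinearMap.ker (Lmap m K) := by
  rw [CycG, Submodule.span_le]
  rintro x ⟨v, rfl⟩
  rw [SetLike.mem_coe, LinearMap.mem_ker, map_sub, sub_eq_zero]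
  rw [Lmap_tprod, Lmap_tprod]
  have hterm : ∀ f : X m K,
      coordFn m K f (fun i => v (finRotate (K + 1) i))
        = coordFn m K (fun j => f ((finRotate (K + 1)).symm j)) v := by
    intro f
    rw [coordFn_apply, coordFn_apply]
    exact Fintype.prod_equiv (finRotate (K + 1)) _ _
      (fun i => by rw [Equiv.symm_apply_apply])
  calc (∑ f : X m K, coordFn m K f v • ind m K f)
      = ∑ f : X m K,
          coordFn m K (fun j => f ((finRotate (K + 1)).symm j)) v
            • ind m K (fun j => f ((finRotate (K + 1)).symm j)) := by
        exact (Equiv.sum_comp (Equiv.arrowCongr (finRotate (K + 1)) (Equiv.refl (Fin m)))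
          (fun g : X m K => coordFn m K g v • ind m K g)).symm
    _ = ∑ f : X m K, coordFn m K f (fun i => v (finRotate (K + 1) i)) • ind m K f := by
        refine Finset.sum_congr rfl fun f _ => ?_
        rw [hterm, ind_rot]

variable (m K)

def Nmod := T m K ⧸ CycG m K

instance : AddCommGroup (Nmod m K) := by unfold Nmod; infer_instance
instance : Module ℂ (Nmod m K) := by unfold Nmod; infer_instance

def πmap : T m K →ₗ[ℂ] Nmod m K := (CycG m K).mkQ

variable {m K}

lemma πmap_E_one_vadd (f : X m K) :
    πmap m K (E m K ((1 : Fin (K + 1)) +ᵥ f)) = πmap m K (E m K f) := by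
  show Submodule.Quotient.mk _ = Submodule.Quotient.mk _
  refine ((Submodule.Quotient.eq _).2 ?_).symm
  refine Submodule.subset_span ⟨fun i => Pi.single (f i) 1, ?_⟩
  congr 1
  refine congrArg _ ?_
  funext i
  show f (i + 1) = f (finRotate (K + 1) i)
  rw [finRotate_succ_apply]

open Fin.NatCast Fin.CommRing in
lemma πmap_E_vadd (n : Fin (K + 1)) (f : X m K) :
    πmap m K (E m K (n +ᵥ f)) = πmap m K (E m K f) := by
  have key : ∀ (t : ℕ) (f : X m K),
      πmap m K (E m K (((t : Fin (K + 1))) +ᵥ f)) = πmap m K (E m K f) := by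
    intro t
    induction t with
    | zero => intro f; rw [Nat.cast_zero, zero_vadd]
    | succ t ih =>
      intro f
      have : ((t + 1 : ℕ) : Fin (K + 1)) = ((t : ℕ) : Fin (K + 1)) + 1 := by push_cast; ring
      rw [this, add_vadd, ih, πmap_E_one_vadd]
  have := key n.val f
  rwa [Fin.cast_val_eq_self] at this

lemma πmap_E_cls (f g : X m K) (h : cls m K f = cls m K g) :
    πmap m K (E m K f) = πmap m K (E m K g) := by
  obtain ⟨n, hn⟩ := AddAction.mem_orbit_iff.1 ((AddAction.orbitRel_apply).1 (Quotient.exact h))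
  rw [← hn, πmap_E_vadd]

variable (m K)

def ψmap : (Q m K → ℂ) →ₗ[ℂ] Nmod m K :=
  (Pi.basisFun ℂ (Q m K)).constr ℂ (fun q => πmap m K (E m K q.out))

def Lbar : Nmod m K →ₗ[ℂ] (Q m K → ℂ) := (CycG m K).liftQ (Lmap m K) CycG_le_ker

variable {m K}

lemma comp1 : (Lbar m K).comp (ψmap m K) = LinearMap.id := by
  refine (Pi.basisFun ℂ (Q m K)).ext fun q => ?_
  rw [LinearMap.comp_apply, ψmap, Module.Basis.constr_basis, LinearMap.id_apply]
  show (CycG m K).liftQ (Lmap m K) CycG_le_ker (Submodule.Quotient.mk (E m K q.out))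
      = Pi.basisFun ℂ (Q m K) q
  rw [Submodule.liftQ_apply, Lmap_E, Pi.basisFun_apply, ind]
  rw [show cls m K q.out = q from Quotient.out_eq q]

lemma comp2 : (ψmap m K).comp (Lbar m K) = LinearMap.id := by
  refine Submodule.linearMap_qext _ (LinearMap.ext fun x => ?_)
  show ψmap m K (Lmap m K x) = Submodule.Quotient.mk x
  have hterm : ∀ (v : Fin (K + 1) → (Fin m → ℂ)) (f : X m K),
      ψmap m K (coordFn m K f v • ind m K f)
        = coordFn m K f v • Submodule.Quotient.mk (p := CycG m K) (E m K f) := by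
    intro v f
    rw [map_smul]
    congr 1
    have h1 : ind m K f = Pi.basisFun ℂ (Q m K) (cls m K f) := by
      rw [Pi.basisFun_apply, ind]
    rw [h1, ψmap, Module.Basis.constr_basis]
    exact πmap_E_cls _ _ (Quotient.out_eq (cls m K f))
  induction x using PiTensorProduct.induction_on with
  | smul_tprod r v =>
    rw [map_smul, map_smul, Submodule.Quotient.mk_smul]
    congr 1
    rw [Lmap_tprod, map_sum, Finset.sum_congr rfl fun f _ => hterm v f]
    rw [tprod_expand (v := v), ← Submodule.mkQ_apply, map_sum]
    exact Finset.sum_congr rfl fun f _ => by rw [map_smul, Submodule.mkQ_apply]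
  | add x y hx hy =>
    rw [map_add, map_add, hx, hy]
    simp [Submodule.Quotient.mk_add]
    rfl

def bigEquiv : Nmod m K ≃ₗ[ℂ] (Q m K → ℂ) :=
  LinearEquiv.ofLinear (Lbar m K) (ψmap m K) comp1 comp2

lemma finrank_Nmod : Module.finrank ℂ (Nmod m K) = Fintype.card (Q m K) := by
  rw [(bigEquiv (m := m) (K := K)).finrank_eq, Module.finrank_pi]

/-! ### Burnside counting -/

lemma fixed_card (a : Fin (K + 1)) :
    Fintype.card (AddAction.fixedBy (X m K) a) = m ^ Nat.gcd (K + 1) a.val := by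
  rw [← Nat.card_eq_fintype_card]
  have hset : (AddAction.fixedBy (X m K) a) = {f : X m K | ∀ j, f (j + a) = f j} := by
    ext f
    show a +ᵥ f = f ↔ _
    rw [vadd_def, funext_iff]
    rfl
  rw [hset]
  have h := countfix (β := Fin m) (K + 1) a
  rw [Nat.card_eq_fintype_card (α := Fin m), Fintype.card_fin] at h
  exact h

lemma card_orbits_mul :
    Fintype.card (Q m K) * (K + 1) = ∑ a : Fin (K + 1), m ^ Nat.gcd (K + 1) a.val := by
  have hb := AddAction.sum_card_fixedBy_eq_card_orbits_mul_card_addGroup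
    (Fin (K + 1)) (X m K)
  rw [Fintype.card_fin] at hb
  rw [← hb]
  exact Finset.sum_congr rfl fun a _ => fixed_card (m := m) a

lemma sum_gcd_icc (M n : ℕ) :
    ∑ a : Fin (n + 1), M ^ Nat.gcd (n + 1) a.val
      = ∑ i ∈ Finset.Icc 1 (n + 1), M ^ Nat.gcd (n + 1) i := by
  rw [Fin.sum_univ_eq_sum_range (fun i => M ^ Nat.gcd (n + 1) i)]
  refine Finset.sum_nbij' (fun a => if a = 0 then n + 1 else a)
    (fun a => if a = n + 1 then 0 else a) ?_ ?_ ?_ ?_ ?_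
  · intro a ha
    rw [Finset.mem_range] at ha
    by_cases h : a = 0 <;> simp [h, Finset.mem_Icc] <;> omega
  · intro a ha
    rw [Finset.mem_Icc] at ha
    by_cases h : a = n + 1 <;> simp [h, Finset.mem_range] <;> omega
  · intro a ha
    rw [Finset.mem_range] at ha
    by_cases h : a = 0 <;> simp [h] <;> omega
  · intro a ha
    rw [Finset.mem_Icc] at ha
    by_cases h : a = n + 1 <;> simp [h] <;> omega
  · intro a ha
    show M ^ Nat.gcd (n + 1) a = M ^ Nat.gcd (n + 1) (if a = 0 then n + 1 else a)
    by_cases h : a = 0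
    · subst h; rw [if_pos rfl, Nat.gcd_zero_right, Nat.gcd_self]
    · rw [if_neg h]

end NecklaceAux

/-!
STATEMENT 1
-/
theorem stmt_1 (d k : ℕ) (hd : 1 ≤ d) (hk : 1 ≤ k) :
    Module.finrank ℂ ((⨂[ℂ] _ : Fin k, (Fin (2 * d) → ℂ)) ⧸ Cyc d k) * k =
      ∑ i ∈ Finset.Icc 1 k, (2 * d) ^ Nat.gcd k i := by
  obtain ⟨K, rfl⟩ : ∃ K, k = K + 1 := ⟨k - 1, (Nat.succ_pred_eq_of_pos hk).symm⟩
  have hfr : Module.finrank ℂ ((⨂[ℂ] _ : Fin (K + 1), (Fin (2 * d) → ℂ)) ⧸ Cyc d (K + 1))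
      = Fintype.card (NecklaceAux.Q (2 * d) K) :=
    NecklaceAux.finrank_Nmod (m := 2 * d) (K := K)
  rw [hfr, NecklaceAux.card_orbits_mul, NecklaceAux.sum_gcd_icc]
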